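/- For every natural number i, the set S_i of the greedy partition of the natural numbers into 3-free sequences is nonempty, and its least element equals the base-3 value of the base-3/2 representation of 2i. (Equivalently: the Stanley cross-sequence, whose i-th term is the first term of S_i, written in base 3 is the same as the sequence of even non-negative integers written in base 3/2.) -/

import Mathlib

abbrev Digit := Fin 3

/-- Base-3 value of a digit string (most significant digit first). -/
def val3 (w : List Digit) : ℕ := w.foldl (fun acc d => 3 * acc + d.val) 0

/-- Base-3/2 representation of a natural number via `rep`: `rep 0` is the empty string
and `rep N = rep (2 * (N - N % 3) / 3) ++ [N % 3]` for `N > 0`. -/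
def rep32 : ℕ → List Digit
  | 0 => []
  | n + 1 => rep32 (2 * ((n + 1) / 3)) ++ [(Fin.ofNat 3 ((n + 1) % 3 : ℕ) : Digit)]
decreasing_by omega

/-- The base-3/2 representation `(N)_{3/2}`, with `(0)_{3/2}` the single digit 0. -/
def baseThreeHalves (N : ℕ) : List Digit := if N = 0 then [0] else rep32 N

/-- The greedy labeling of the natural numbers into 3-free sequences:
`stanleyLabel n` is the least label `i` such that there are no `u < v < n` with
`stanleyLabel u = stanleyLabel v = i` and `u + n = 2 * v`. The `i`-th sequence of
the greedy partition is `S_i = {n | stanleyLabel n = i}`. -/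
noncomputable def stanleyLabel : ℕ → ℕ
  | n => sInf {i | ∀ u v : ℕ, u < v → v < n →
      stanleyLabel u = i → stanleyLabel v = i → u + n ≠ 2 * v}
termination_by n => n
decreasing_by all_goals omega

/-- Closed form of the greedy labeling. -/
def gl : ℕ → ℕ
  | 0 => 0
  | n + 1 => (3 * gl ((n + 1) / 3) + (n + 1) % 3) / 2
decreasing_by omega

lemma gl_zero : gl 0 = 0 := by simp [gl]

lemma gl_step (n : ℕ) : gl n = (3 * gl (n / 3) + n % 3) / 2 := by
  cases n with
  | zero => simp [gl]
  | succ m => rw [gl]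

lemma gl3 (a x : ℕ) (hx : x < 3) : gl (3 * a + x) = (3 * gl a + x) / 2 := by
  rw [gl_step]
  have h1 : (3 * a + x) / 3 = a := by omega
  have h2 : (3 * a + x) % 3 = x := by omega
  rw [h1, h2]

/-- Soundness: every fiber of `gl` is 3-free. -/
lemma gl_threeFree : ∀ c a b : ℕ, a < b → b < c → a + c = 2 * b →
    gl a = gl b → gl b = gl c → False := by
  intro c
  induction c using Nat.strong_induction_on with
  | _ c IH =>
    intro a b hab hbc habc h1 h2
    have ea := gl_step a
    have eb := gl_step b
    have ec := gl_step c
    have Ea : 3 * gl (a / 3) + a % 3 = 2 * gl c ∨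
        3 * gl (a / 3) + a % 3 = 2 * gl c + 1 := by omega
    have Eb : 3 * gl (b / 3) + b % 3 = 2 * gl c ∨
        3 * gl (b / 3) + b % 3 = 2 * gl c + 1 := by omega
    have Ec : 3 * gl (c / 3) + c % 3 = 2 * gl c ∨
        3 * gl (c / 3) + c % 3 = 2 * gl c + 1 := by omega
    have hd3 : a % 3 + c % 3 = 2 * (b % 3) ∨ a % 3 + c % 3 = 2 * (b % 3) + 3 ∨
        a % 3 + c % 3 + 3 = 2 * (b % 3) := by omega
    by_cases hac : a / 3 = c / 3
    · have g1 : gl (a / 3) = gl (c / 3) := by rw [hac]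
      have hb3 : b / 3 = c / 3 := by omega
      have g2 : gl (b / 3) = gl (c / 3) := by rw [hb3]
      omega
    · by_cases k1 : gl (a / 3) = gl (b / 3)
      · by_cases k2 : gl (b / 3) = gl (c / 3)
        · by_cases k3 : a / 3 + c / 3 = 2 * (b / 3)
          · exact IH (c / 3) (by omega) (a / 3) (b / 3) (by omega) (by omega) k3 k1 k2
          · rcases hd3 with hd3|hd3|hd3 <;> omega
        · rcases hd3 with hd3|hd3|hd3 <;> omega
      · rcases hd3 with hd3|hd3|hd3 <;> omega

/-- Completeness: the three witness statements, proved jointly by strong induction. -/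
lemma gl_complete (q : ℕ) :
    (∀ k, 2 * k + 2 ≤ 3 * gl (q / 3) + q % 3 →
      ∃ u v, u < v ∧ v ≤ q ∧ gl u = k ∧ gl v = k ∧ u + q = 2 * v) ∧
    (∀ k, 2 * k + 2 ≤ 3 * gl (q / 3) + q % 3 →
      ∃ u v, u < v ∧ v ≤ q ∧ gl u = k ∧ gl v = k + 1 ∧ u + q + 1 = 2 * v) ∧
    (∀ k, 2 * k + 2 ≤ 3 * gl (q / 3) + q % 3 →
      ∃ u v, u ≤ v ∧ v ≤ q ∧ gl u = k ∧ gl v = k ∧ u + q = 2 * v + 1) := by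
  induction q using Nat.strong_induction_on with
  | _ q IH =>
    rcases Nat.eq_zero_or_pos q with rfl | hq
    · have hg0 : gl (0 / 3) = 0 := by rw [show (0:ℕ) / 3 = 0 from rfl]; exact gl_zero
      exact ⟨fun k hk => absurd hk (by omega), fun k hk => absurd hk (by omega),
             fun k hk => absurd hk (by omega)⟩
    obtain ⟨IHM, IHN, IHM2⟩ := IH (q / 3) (by omega)
    have hH : gl (q / 3) = (3 * gl (q / 3 / 3) + q / 3 % 3) / 2 := gl_step (q / 3)
    refine ⟨?_, ?_, ?_⟩ <;> intro k hk
    ·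
      by_cases hA : 2*k+2 ≤ 3 * gl (q/3)
      · rcases (show (2*k) % 3 = 0 ∨ (2*k) % 3 = 1 ∨ (2*k) % 3 = 2 by omega) with hs|hs|hs <;>
          rcases (show q % 3 = 0 ∨ q % 3 = 1 ∨ q % 3 = 2 by omega) with hd|hd|hd
        · obtain ⟨u, v, h1, h2, h3, h4, h5⟩ := IHM (2*k/3) (by omega)
          exact ⟨3*u+0, 3*v+0, by omega, by omega,
            by rw [gl3 u 0 (by norm_num)]; omega,
            by rw [gl3 v 0 (by norm_num)]; omega, by omega⟩
        · obtain ⟨u, v, h1, h2, h3, h4, h5⟩ := IHM (2*k/3) (by omega)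
          exact ⟨3*u+1, 3*v+1, by omega, by omega,
            by rw [gl3 u 1 (by norm_num)]; omega,
            by rw [gl3 v 1 (by norm_num)]; omega, by omega⟩
        · obtain ⟨u, v, h1, h2, h3, h4, h5⟩ := IHM (2*k/3) (by omega)
          exact ⟨3*u+0, 3*v+1, by omega, by omega,
            by rw [gl3 u 0 (by norm_num)]; omega,
            by rw [gl3 v 1 (by norm_num)]; omega, by omega⟩
        · obtain ⟨u, v, h1, h2, h3, h4, h5⟩ := IHM (2*k/3) (by omega)
          exact ⟨3*u+2, 3*v+1, by omega, by omega,
            by rw [gl3 u 2 (by norm_num)]; omega,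
            by rw [gl3 v 1 (by norm_num)]; omega, by omega⟩
        · obtain ⟨u, v, h1, h2, h3, h4, h5⟩ := IHM (2*k/3) (by omega)
          exact ⟨3*u+1, 3*v+1, by omega, by omega,
            by rw [gl3 u 1 (by norm_num)]; omega,
            by rw [gl3 v 1 (by norm_num)]; omega, by omega⟩
        · obtain ⟨u, v, h1, h2, h3, h4, h5⟩ := IHM (2*k/3) (by omega)
          exact ⟨3*u+2, 3*v+2, by omega, by omega,
            by rw [gl3 u 2 (by norm_num)]; omega,
            by rw [gl3 v 2 (by norm_num)]; omega, by omega⟩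
        · obtain ⟨u, v, h1, h2, h3, h4, h5⟩ := IHM (2*k/3+1) (by omega)
          exact ⟨3*u+0, 3*v+0, by omega, by omega,
            by rw [gl3 u 0 (by norm_num)]; omega,
            by rw [gl3 v 0 (by norm_num)]; omega, by omega⟩
        · obtain ⟨u, v, h1, h2, h3, h4, h5⟩ := IHN (2*k/3) (by omega)
          exact ⟨3*u+2, 3*v+0, by omega, by omega,
            by rw [gl3 u 2 (by norm_num)]; omega,
            by rw [gl3 v 0 (by norm_num)]; omega, by omega⟩
        · obtain ⟨u, v, h1, h2, h3, h4, h5⟩ := IHM (2*k/3) (by omega)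
          exact ⟨3*u+2, 3*v+2, by omega, by omega,
            by rw [gl3 u 2 (by norm_num)]; omega,
            by rw [gl3 v 2 (by norm_num)]; omega, by omega⟩
      · rcases (show 3 * gl (q/3) = 2*k ∨ 3 * gl (q/3) = 2*k+1 by omega) with hB|hB
        · exact ⟨3*(q/3)+0, 3*(q/3)+1, by omega, by omega,
            by rw [gl3 (q/3) 0 (by norm_num)]; omega,
            by rw [gl3 (q/3) 1 (by norm_num)]; omega, by omega⟩
        · rcases (show q % 3 = 1 ∨ q % 3 = 2 by omega) with hd|hd
          · obtain ⟨u, v, h1, h2, h3, h4, h5⟩ := IHN (gl (q/3) - 1) (by omega)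
            exact ⟨3*u+2, 3*v+0, by omega, by omega,
              by rw [gl3 u 2 (by norm_num)]; omega,
              by rw [gl3 v 0 (by norm_num)]; omega, by omega⟩
          · obtain ⟨u, v, h1, h2, h3, h4, h5⟩ := IHM (gl (q/3) - 1) (by omega)
            exact ⟨3*u+2, 3*v+2, by omega, by omega,
              by rw [gl3 u 2 (by norm_num)]; omega,
              by rw [gl3 v 2 (by norm_num)]; omega, by omega⟩
    ·
      by_cases hA : 2*k+2 ≤ 3 * gl (q/3)
      · rcases (show (2*k) % 3 = 0 ∨ (2*k) % 3 = 1 ∨ (2*k) % 3 = 2 by omega) with hs|hs|hs <;>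
          rcases (show q % 3 = 0 ∨ q % 3 = 1 ∨ q % 3 = 2 by omega) with hd|hd|hd
        · obtain ⟨u, v, h1, h2, h3, h4, h5⟩ := IHM2 (2*k/3) (by omega)
          exact ⟨3*u+0, 3*v+2, by omega, by omega,
            by rw [gl3 u 0 (by norm_num)]; omega,
            by rw [gl3 v 2 (by norm_num)]; omega, by omega⟩
        · obtain ⟨u, v, h1, h2, h3, h4, h5⟩ := IHN (2*k/3) (by omega)
          exact ⟨3*u+1, 3*v+0, by omega, by omega,
            by rw [gl3 u 1 (by norm_num)]; omega,
            by rw [gl3 v 0 (by norm_num)]; omega, by omega⟩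
        · obtain ⟨u, v, h1, h2, h3, h4, h5⟩ := IHM (2*k/3) (by omega)
          exact ⟨3*u+1, 3*v+2, by omega, by omega,
            by rw [gl3 u 1 (by norm_num)]; omega,
            by rw [gl3 v 2 (by norm_num)]; omega, by omega⟩
        · obtain ⟨u, v, h1, h2, h3, h4, h5⟩ := IHN (2*k/3) (by omega)
          exact ⟨3*u+2, 3*v+0, by omega, by omega,
            by rw [gl3 u 2 (by norm_num)]; omega,
            by rw [gl3 v 0 (by norm_num)]; omega, by omega⟩
        · obtain ⟨u, v, h1, h2, h3, h4, h5⟩ := IHN (2*k/3) (by omega)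
          exact ⟨3*u+1, 3*v+0, by omega, by omega,
            by rw [gl3 u 1 (by norm_num)]; omega,
            by rw [gl3 v 0 (by norm_num)]; omega, by omega⟩
        · obtain ⟨u, v, h1, h2, h3, h4, h5⟩ := IHN (2*k/3) (by omega)
          exact ⟨3*u+2, 3*v+1, by omega, by omega,
            by rw [gl3 u 2 (by norm_num)]; omega,
            by rw [gl3 v 1 (by norm_num)]; omega, by omega⟩
        · obtain ⟨u, v, h1, h2, h3, h4, h5⟩ := IHM2 (2*k/3+1) (by omega)
          exact ⟨3*u+0, 3*v+2, by omega, by omega,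
            by rw [gl3 u 0 (by norm_num)]; omega,
            by rw [gl3 v 2 (by norm_num)]; omega, by omega⟩
        · obtain ⟨u, v, h1, h2, h3, h4, h5⟩ := IHM (2*k/3+1) (by omega)
          exact ⟨3*u+0, 3*v+1, by omega, by omega,
            by rw [gl3 u 0 (by norm_num)]; omega,
            by rw [gl3 v 1 (by norm_num)]; omega, by omega⟩
        · obtain ⟨u, v, h1, h2, h3, h4, h5⟩ := IHN (2*k/3) (by omega)
          exact ⟨3*u+2, 3*v+1, by omega, by omega,
            by rw [gl3 u 2 (by norm_num)]; omega,
            by rw [gl3 v 1 (by norm_num)]; omega, by omega⟩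
      · rcases (show 3 * gl (q/3) = 2*k ∨ 3 * gl (q/3) = 2*k+1 by omega) with hB|hB
        · exact ⟨3*(q/3)+1, 3*(q/3)+2, by omega, by omega,
            by rw [gl3 (q/3) 1 (by norm_num)]; omega,
            by rw [gl3 (q/3) 2 (by norm_num)]; omega, by omega⟩
        · rcases (show q % 3 = 1 ∨ q % 3 = 2 by omega) with hd|hd
          · exact ⟨3*(q/3)+0, 3*(q/3)+1, by omega, by omega,
              by rw [gl3 (q/3) 0 (by norm_num)]; omega,
              by rw [gl3 (q/3) 1 (by norm_num)]; omega, by omega⟩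
          · obtain ⟨u, v, h1, h2, h3, h4, h5⟩ := IHN (gl (q/3) - 1) (by omega)
            exact ⟨3*u+2, 3*v+1, by omega, by omega,
              by rw [gl3 u 2 (by norm_num)]; omega,
              by rw [gl3 v 1 (by norm_num)]; omega, by omega⟩
    ·
      by_cases hA : 2*k+2 ≤ 3 * gl (q/3)
      · rcases (show (2*k) % 3 = 0 ∨ (2*k) % 3 = 1 ∨ (2*k) % 3 = 2 by omega) with hs|hs|hs <;>
          rcases (show q % 3 = 0 ∨ q % 3 = 1 ∨ q % 3 = 2 by omega) with hd|hd|hd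
        · obtain ⟨u, v, h1, h2, h3, h4, h5⟩ := IHM2 (2*k/3) (by omega)
          exact ⟨3*u+0, 3*v+1, by omega, by omega,
            by rw [gl3 u 0 (by norm_num)]; omega,
            by rw [gl3 v 1 (by norm_num)]; omega, by omega⟩
        · obtain ⟨u, v, h1, h2, h3, h4, h5⟩ := IHM (2*k/3) (by omega)
          exact ⟨3*u+0, 3*v+0, by omega, by omega,
            by rw [gl3 u 0 (by norm_num)]; omega,
            by rw [gl3 v 0 (by norm_num)]; omega, by omega⟩
        · obtain ⟨u, v, h1, h2, h3, h4, h5⟩ := IHM (2*k/3) (by omega)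
          exact ⟨3*u+1, 3*v+1, by omega, by omega,
            by rw [gl3 u 1 (by norm_num)]; omega,
            by rw [gl3 v 1 (by norm_num)]; omega, by omega⟩
        · obtain ⟨u, v, h1, h2, h3, h4, h5⟩ := IHM2 (2*k/3) (by omega)
          exact ⟨3*u+2, 3*v+2, by omega, by omega,
            by rw [gl3 u 2 (by norm_num)]; omega,
            by rw [gl3 v 2 (by norm_num)]; omega, by omega⟩
        · obtain ⟨u, v, h1, h2, h3, h4, h5⟩ := IHM (2*k/3) (by omega)
          exact ⟨3*u+2, 3*v+1, by omega, by omega,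
            by rw [gl3 u 2 (by norm_num)]; omega,
            by rw [gl3 v 1 (by norm_num)]; omega, by omega⟩
        · obtain ⟨u, v, h1, h2, h3, h4, h5⟩ := IHM (2*k/3) (by omega)
          exact ⟨3*u+1, 3*v+1, by omega, by omega,
            by rw [gl3 u 1 (by norm_num)]; omega,
            by rw [gl3 v 1 (by norm_num)]; omega, by omega⟩
        · obtain ⟨u, v, h1, h2, h3, h4, h5⟩ := IHM2 (2*k/3) (by omega)
          exact ⟨3*u+2, 3*v+2, by omega, by omega,
            by rw [gl3 u 2 (by norm_num)]; omega,
            by rw [gl3 v 2 (by norm_num)]; omega, by omega⟩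
        · obtain ⟨u, v, h1, h2, h3, h4, h5⟩ := IHM (2*k/3+1) (by omega)
          exact ⟨3*u+0, 3*v+0, by omega, by omega,
            by rw [gl3 u 0 (by norm_num)]; omega,
            by rw [gl3 v 0 (by norm_num)]; omega, by omega⟩
        · obtain ⟨u, v, h1, h2, h3, h4, h5⟩ := IHN (2*k/3) (by omega)
          exact ⟨3*u+2, 3*v+0, by omega, by omega,
            by rw [gl3 u 2 (by norm_num)]; omega,
            by rw [gl3 v 0 (by norm_num)]; omega, by omega⟩
      · rcases (show 3 * gl (q/3) = 2*k ∨ 3 * gl (q/3) = 2*k+1 by omega) with hB|hB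
        · exact ⟨3*(q/3)+1, 3*(q/3)+1, by omega, by omega,
            by rw [gl3 (q/3) 1 (by norm_num)]; omega,
            by rw [gl3 (q/3) 1 (by norm_num)]; omega, by omega⟩
        · rcases (show q % 3 = 1 ∨ q % 3 = 2 by omega) with hd|hd
          · exact ⟨3*(q/3)+0, 3*(q/3)+0, by omega, by omega,
              by rw [gl3 (q/3) 0 (by norm_num)]; omega,
              by rw [gl3 (q/3) 0 (by norm_num)]; omega, by omega⟩
          · obtain ⟨u, v, h1, h2, h3, h4, h5⟩ := IHN (gl (q/3) - 1) (by omega)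
            exact ⟨3*u+2, 3*v+0, by omega, by omega,
              by rw [gl3 u 2 (by norm_num)]; omega,
              by rw [gl3 v 0 (by norm_num)]; omega, by omega⟩

lemma V_cons (N : ℕ) (hN : N ≠ 0) :
    val3 (rep32 N) = 3 * val3 (rep32 (2 * (N / 3))) + N % 3 := by
  obtain ⟨n, rfl⟩ : ∃ n, N = n + 1 := ⟨N - 1, by omega⟩
  rw [rep32]
  show List.foldl _ 0 (_ ++ _) = _
  rw [List.foldl_append]
  show 3 * val3 (rep32 (2 * ((n + 1) / 3))) + ((Fin.ofNat 3 ((n + 1) % 3 : ℕ) : Digit)).val = _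
  have : ((Fin.ofNat 3 ((n + 1) % 3 : ℕ) : Digit)).val = (n + 1) % 3 := by
    simp [Fin.val_natCast]
    try omega
  omega

lemma gl_V : ∀ N : ℕ, gl (val3 (rep32 N)) = N / 2 := by
  intro N
  induction N using Nat.strong_induction_on with
  | _ N IH =>
    rcases Nat.eq_zero_or_pos N with rfl | hN
    · show gl (val3 (rep32 0)) = 0
      rw [show rep32 0 = [] from by simp [rep32]]
      exact gl_zero
    · rw [V_cons N (by omega), gl3 _ _ (show N % 3 < 3 by omega)]
      have := IH (2 * (N / 3)) (by omega)
      omega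

lemma V_lt : ∀ N : ℕ, val3 (rep32 N) < val3 (rep32 (N + 1)) := by
  intro N
  induction N using Nat.strong_induction_on with
  | _ N IH =>
    have e1 := V_cons (N + 1) (by omega)
    by_cases h2 : N % 3 = 2
    · have e2 := V_cons N (by omega)
      have i1 := IH (2 * (N / 3)) (by omega)
      have i2 := IH (2 * (N / 3) + 1) (by omega)
      rw [show 2 * (N / 3) + 1 + 1 = 2 * ((N + 1) / 3) from by omega] at i2
      omega
    · rcases Nat.eq_zero_or_pos N with rfl | hN
      · have : val3 (rep32 0) = 0 := by rw [show rep32 0 = [] from by simp [rep32]]; rfl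
        omega
      · have e2 := V_cons N (by omega)
        rw [show (N + 1) / 3 = N / 3 from by omega] at e1
        omega

lemma V_le_self : ∀ n : ℕ, val3 (rep32 (2 * gl n)) ≤ n := by
  intro n
  induction n using Nat.strong_induction_on with
  | _ n IH =>
    rcases Nat.eq_zero_or_pos n with rfl | hn
    · rw [show 2 * gl 0 = 0 from by rw [gl_zero]]
      rw [show rep32 0 = [] from by simp [rep32]]
      exact Nat.le_refl _
    · have hg := gl_step n
      have hIH := IH (n / 3) (by omega)
      by_cases hk0 : gl n = 0
      · rw [show 2 * gl n = 0 from by omega]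
        rw [show rep32 0 = [] from by simp [rep32]]
        exact Nat.zero_le _
      · have hV := V_cons (2 * gl n) (by omega)
        by_cases cA : 2 * gl n / 3 = gl (n / 3)
        · rw [cA] at hV
          omega
        · have ht : 2 * gl n / 3 + 1 = gl (n / 3) := by omega
          have m1 := V_lt (2 * (2 * gl n / 3))
          have m2 := V_lt (2 * (2 * gl n / 3) + 1)
          rw [show 2 * (2 * gl n / 3) + 1 + 1 = 2 * (2 * gl n / 3 + 1) from by omega,
            ht] at m2
          omega

lemma label_eq : ∀ n : ℕ, stanleyLabel n = gl n := by
  intro n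
  induction n using Nat.strong_induction_on with
  | _ n IH =>
    rw [stanleyLabel]
    have hset : {i | ∀ u v : ℕ, u < v → v < n →
        stanleyLabel u = i → stanleyLabel v = i → u + n ≠ 2 * v}
        = {i | ∀ u v : ℕ, u < v → v < n → gl u = i → gl v = i → u + n ≠ 2 * v} := by
      ext j
      simp only [Set.mem_setOf_eq]
      constructor
      · intro h u v h1 h2 g1 g2
        exact h u v h1 h2 (by rw [IH u (by omega)]; exact g1) (by rw [IH v h2]; exact g2)
      · intro h u v h1 h2 g1 g2
        exact h u v h1 h2 (by rw [← IH u (by omega)]; exact g1)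
          (by rw [← IH v h2]; exact g2)
    rw [hset]
    have hmem : gl n ∈ {i | ∀ u v : ℕ, u < v → v < n →
        gl u = i → gl v = i → u + n ≠ 2 * v} := by
      intro u v h1 h2 g1 g2 habs
      exact gl_threeFree n u v h1 h2 habs (g1.trans g2.symm) g2
    have hlow : ∀ j, j < gl n → j ∉ {i | ∀ u v : ℕ, u < v → v < n →
        gl u = i → gl v = i → u + n ≠ 2 * v} := by
      intro j hj hmemj
      have hg := gl_step n
      obtain ⟨u, v, h1, h2, h3, h4, h5⟩ := (gl_complete n).1 j (by omega)
      exact (hmemj u v h1 (by omega) h3 h4) h5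
    have hle : sInf {i | ∀ u v : ℕ, u < v → v < n →
        gl u = i → gl v = i → u + n ≠ 2 * v} ≤ gl n := Nat.sInf_le hmem
    rcases Nat.lt_or_ge (sInf {i | ∀ u v : ℕ, u < v → v < n →
        gl u = i → gl v = i → u + n ≠ 2 * v}) (gl n) with h | h
    · exact absurd (Nat.sInf_mem ⟨gl n, hmem⟩) (hlow _ h)
    · omega

lemma base_eq (M : ℕ) : val3 (baseThreeHalves M) = val3 (rep32 M) := by
  unfold baseThreeHalves
  split
  · next h =>
    subst h
    rw [show rep32 0 = [] from by simp [rep32]]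
    rfl
  · rfl

/-- For every natural number `i`, the set `S_i` of the greedy partition of the natural
numbers into 3-free sequences is nonempty and its least element equals the base-3
value of the base-3/2 representation of `2 * i`. -/
theorem stanley_cross_sequence (i : ℕ) :
    IsLeast {n : ℕ | stanleyLabel n = i} (val3 (baseThreeHalves (2 * i))) := by
  constructor
  · show stanleyLabel (val3 (baseThreeHalves (2 * i))) = i
    rw [base_eq, label_eq, gl_V]
    omega
  · intro n hn
    have h1 : gl n = i := by rw [← label_eq]; exact hn
    have h2 := V_le_self n
    rw [base_eq]
    calc val3 (rep32 (2 * i)) = val3 (rep32 (2 * gl n)) := by rw [h1]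
      _ ≤ n := h2
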